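/- Let L ≥ 1, N a positive even integer, Δx = L/N ≤ 1, k_c = π/Δx, and let θ̂ : ℝ → ℝ satisfy 0 ≤ θ̂ ≤ 1 and θ̂(k) = 0 for |k| ≥ (3/4)k_c. Define ĥ_k = θ̂(k)(k² − k_c²) + k_c² for k ∈ 𝒦. Then ĥ_k ≥ k² for every k ∈ 𝒦, and consequently Δk Σ_{k∈𝒦} 1/(1 + ĥ_k)² ≤ ∫_{−∞}^{∞} dk/(1+k²)² + 2π; in particular the Fourier-space norm of ĝ_k = −1/(1+ĥ_k) satisfies ‖ĝ‖_{L²(𝒦)}² ≤ π/2 + 2π, a bound independent of L and k_c. -/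

import Mathlib

open scoped BigOperators Real
open MeasureTheory

noncomputable section

/-- The periodic distance `min_{k ∈ ℤ} |x - L k|`. -/
def dtilde (L x : ℝ) : ℝ := sInf {r : ℝ | ∃ k : ℤ, r = |x - L * k|}

/-- The mollified periodic distance `d_L(x, 0)`. -/
def dmol (L x : ℝ) : ℝ :=
  Real.sqrt (L ^ 2 / 4 + 1) -
    Real.sqrt ((Real.sqrt (L ^ 2 / 4 + 1) - Real.sqrt (dtilde L x ^ 2 + 1)) ^ 2 + 1)

/-- The mollified periodic distance `d_L(x, y)`. -/
def dL (L x y : ℝ) : ℝ := dmol L (x - y)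

/-- The grid point `x_i = i Δx`, with `Δx = L / N`. -/
def gridX (L : ℝ) (N : ℕ) (i : ZMod N) : ℝ := (ZMod.val i : ℝ) * (L / N)

/-- Forward difference operator on periodic lattice functions. -/
def Dplus {N : ℕ} (dx : ℝ) (f : ZMod N → ℂ) : ZMod N → ℂ :=
  fun i => (f (i + 1) - f i) / (dx : ℂ)

/-- Backward difference operator on periodic lattice functions. -/
def Dminus {N : ℕ} (dx : ℝ) (f : ZMod N → ℂ) : ZMod N → ℂ :=
  fun i => (f i - f (i - 1)) / (dx : ℂ)

/-- Second order finite difference Laplacian `Δ = 𝒟⁺𝒟⁻`. -/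
def discLap {N : ℕ} (dx : ℝ) (f : ZMod N → ℂ) : ZMod N → ℂ :=
  Dplus dx (Dminus dx f)

/-- Weighted `ℓ²` norm `(w Σ |f i|²)^{1/2}`; with `w = Δx` this is `‖·‖_{L²(𝒳)}`,
with `w = Δk` this is `‖·‖_{L²(𝒦)}`. -/
def wnorm {N : ℕ} [NeZero N] (w : ℝ) (f : ZMod N → ℂ) : ℝ :=
  Real.sqrt (w * ∑ i : ZMod N, ‖f i‖ ^ 2)

/-- The Fourier grid point `k = n Δk` with `n ∈ (-N/2, N/2]` corresponding to `j ∈ ZMod N`. -/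
def kval (L : ℝ) (N : ℕ) (j : ZMod N) : ℝ :=
  ((if (ZMod.val j : ℤ) ≤ (N : ℤ) / 2 then (ZMod.val j : ℤ) else (ZMod.val j : ℤ) - (N : ℤ)) : ℝ) *
    (2 * Real.pi / L)

/-- Discrete Fourier transform `f̂_k = Δx Σ_x e^{-i k x} f(x)`. -/
def dft (L : ℝ) {N : ℕ} [NeZero N] (f : ZMod N → ℂ) (j : ZMod N) : ℂ :=
  ((L / N : ℝ) : ℂ) *
    ∑ i : ZMod N, Complex.exp (-Complex.I * (kval L N j : ℂ) * ((gridX L N i : ℝ) : ℂ)) * f i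

/-- Inverse discrete Fourier transform `f(x) = (1/L) Σ_k e^{i k x} f̂_k`. -/
def idft (L : ℝ) {N : ℕ} [NeZero N] (fh : ZMod N → ℂ) (i : ZMod N) : ℂ :=
  ((1 / L : ℝ) : ℂ) *
    ∑ j : ZMod N, Complex.exp (Complex.I * (kval L N j : ℂ) * ((gridX L N i : ℝ) : ℂ)) * fh j

/-- Periodic difference operator on the Fourier grid, `(𝒟 f̂)_k = (f̂_k - f̂_{k-Δk})/Δk`. -/
def Dk {N : ℕ} (dk : ℝ) (fh : ZMod N → ℂ) : ZMod N → ℂ :=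
  fun j => (fh j - fh (j - 1)) / (dk : ℂ)

/-- Real-valued version of the periodic difference operator on the Fourier grid. -/
def DkR {N : ℕ} (dk : ℝ) (fh : ZMod N → ℝ) : ZMod N → ℝ :=
  fun j => (fh j - fh (j - 1)) / dk

/-- The distance `d(x,0)`: equal to `x` on `[0, L/2)` and `L - x` on `[L/2, L)`. -/
def dfun (L x : ℝ) : ℝ := if x < L / 2 then x else L - x

/-- The mollified symbol `ĥ_k = θ̂(k)(k² - k_c²) + k_c²` on the Fourier grid, `k_c = π N / L`. -/
def hsym (L : ℝ) (N : ℕ) (θ : ℝ → ℝ) (j : ZMod N) : ℝ :=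
  θ (kval L N j) * ((kval L N j) ^ 2 - (Real.pi * N / L) ^ 2) + (Real.pi * N / L) ^ 2

/-- The Fourier space Hamiltonian matrix `Ĥ_{kl} = ĥ_k δ_{kl} + (1/L) V̂_{k-l}`. -/
def Hmat (L : ℝ) {N : ℕ} [NeZero N] (hh : ZMod N → ℝ) (V : ZMod N → ℝ) :
    Matrix (ZMod N) (ZMod N) ℂ :=
  Matrix.of fun k l =>
    (if k = l then (hh k : ℂ) else 0) + ((1 / L : ℝ) : ℂ) * dft L (fun i => (V i : ℂ)) (k - l)

end


open MeasureTheory Set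

noncomputable def gG (k : ℝ) : ℝ := 1 / (1 + k ^ 2) ^ 2

lemma gG_nonneg (k : ℝ) : 0 ≤ gG k := by unfold gG; positivity

lemma gG_le_one (k : ℝ) : gG k ≤ 1 := by
  rw [gG, div_le_one (by positivity)]
  nlinarith [sq_nonneg k, sq_nonneg (k ^ 2)]

lemma gG_even (k : ℝ) : gG (-k) = gG k := by simp [gG]

lemma gG_anti {a b : ℝ} (ha : 0 ≤ a) (hab : a ≤ b) : gG b ≤ gG a := by
  unfold gG
  apply one_div_le_one_div_of_le (by positivity)
  have h1 : a ^ 2 ≤ b ^ 2 := pow_le_pow_left₀ ha hab 2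
  exact pow_le_pow_left₀ (by positivity) (by linarith) 2

lemma continuous_gG : Continuous gG :=
  Continuous.div continuous_const (by continuity) (fun x => by positivity)

noncomputable def Fa (x : ℝ) : ℝ := (x / (1 + x ^ 2) + Real.arctan x) / 2

lemma hasDerivAt_Fa (x : ℝ) : HasDerivAt Fa (gG x) x := by
  have hd : HasDerivAt (fun x : ℝ => 1 + x ^ 2) (2 * x) x := by
    simpa using ((hasDerivAt_pow 2 x).const_add 1)
  have h1 : HasDerivAt (fun x : ℝ => x / (1 + x ^ 2))
      ((1 * (1 + x ^ 2) - x * (2 * x)) / (1 + x ^ 2) ^ 2) x :=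
    (hasDerivAt_id x).div hd (by positivity)
  have h2 := Real.hasDerivAt_arctan x
  have h3 := (h1.add h2).div_const 2
  convert h3 using 1
  · rfl
  · rfl
  · rfl
  rw [gG]
  field_simp
  ring

lemma tendsto_Fa : Filter.Tendsto Fa Filter.atTop (nhds (Real.pi / 4)) := by
  have h1 : Filter.Tendsto (fun x : ℝ => x / (1 + x ^ 2)) Filter.atTop (nhds 0) := by
    apply tendsto_of_tendsto_of_tendsto_of_le_of_le' tendsto_const_nhds tendsto_inv_atTop_zero
    · filter_upwards [Filter.eventually_ge_atTop (0 : ℝ)] with x hx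
      positivity
    · filter_upwards [Filter.eventually_ge_atTop (1 : ℝ)] with x hx
      rw [div_le_iff₀ (by positivity), inv_mul_eq_div, le_div_iff₀ (by linarith)]
      nlinarith
  have h2 : Filter.Tendsto Real.arctan Filter.atTop (nhds (Real.pi / 2)) :=
    Real.tendsto_arctan_atTop.mono_right nhdsWithin_le_nhds
  have h3 := (h1.add h2).div_const 2
  convert h3 using 2
  · rfl
  ring

lemma integrableOn_gG_Ioi : IntegrableOn gG (Ioi (0 : ℝ)) :=
  integrableOn_Ioi_deriv_of_nonneg' (fun x _ => hasDerivAt_Fa x)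
    (fun x _ => gG_nonneg x) tendsto_Fa

lemma integral_gG_Ioi : ∫ x in Ioi (0 : ℝ), gG x = Real.pi / 4 := by
  have h := integral_Ioi_of_hasDerivAt_of_nonneg' (a := 0) (fun x _ => hasDerivAt_Fa x)
    (fun x _ => gG_nonneg x) tendsto_Fa
  simpa [Fa] using h

lemma integral_gG_Iic : ∫ x in Iic (0 : ℝ), gG x = Real.pi / 4 := by
  have h : (∫ x in Iic (0 : ℝ), gG (-x)) = ∫ x in Ioi (-(0 : ℝ)), gG x :=
    integral_comp_neg_Iic 0 gG
  simp only [neg_zero] at h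
  rw [← integral_gG_Ioi, ← h]
  simp only [gG_even]

lemma integrable_gG : Integrable gG := by
  apply integrable_inv_one_add_sq.mono continuous_gG.aestronglyMeasurable
  filter_upwards with x
  rw [Real.norm_eq_abs, Real.norm_eq_abs, abs_of_nonneg (gG_nonneg x),
    abs_of_nonneg (by positivity), gG, one_div]
  apply inv_anti₀ (by positivity)
  nlinarith [sq_nonneg x, sq_nonneg (x ^ 2)]

lemma integral_gG : ∫ x : ℝ, gG x = Real.pi / 2 := by
  rw [← intervalIntegral.integral_Iic_add_Ioi (b := (0:ℝ)) integrable_gG.integrableOn integrable_gG.integrableOn,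
    integral_gG_Iic, integral_gG_Ioi]
  ring

lemma riemann (dk : ℝ) (hdk : 0 < dk) (M : ℕ) :
    ∑ i ∈ Finset.range M, dk * gG ((i + 1) * dk) ≤ ∫ x in Ioi (0 : ℝ), gG x := by
  set a : ℕ → ℝ := fun i => i * dk with ha
  have key : ∀ i : ℕ, dk * gG ((i + 1) * dk) ≤ ∫ x in a i..a (i + 1), gG x := by
    intro i
    have hab : a i ≤ a (i + 1) := by
      simp only [ha]
      push_cast
      nlinarith [Nat.cast_nonneg (α := ℝ) i]
    calc dk * gG ((i + 1) * dk)
        = ∫ _ in a i..a (i + 1), gG ((i + 1) * dk) := by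
          rw [intervalIntegral.integral_const, smul_eq_mul, ha]
          push_cast
          ring
      _ ≤ ∫ x in a i..a (i + 1), gG x := by
          apply intervalIntegral.integral_mono_on hab (intervalIntegrable_const)
            (continuous_gG.intervalIntegrable _ _)
          intro x hx
          have h0 : (0:ℝ) ≤ a i := by
            simp only [ha]; positivity
          have hx1 : 0 ≤ x := le_trans h0 hx.1
          have hx2 : x ≤ (i + 1) * dk := by
            have := hx.2; simpa [ha] using this
          exact gG_anti hx1 hx2
  calc ∑ i ∈ Finset.range M, dk * gG ((i + 1) * dk)
      ≤ ∑ i ∈ Finset.range M, ∫ x in a i..a (i + 1), gG x :=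
        Finset.sum_le_sum fun i _ => key i
    _ = ∫ x in (a 0)..(a M), gG x :=
        intervalIntegral.sum_integral_adjacent_intervals
          (fun k _ => continuous_gG.intervalIntegrable _ _)
    _ ≤ ∫ x in Ioi (0 : ℝ), gG x := by
        have h0 : a 0 = 0 := by simp [ha]
        have hM : a 0 ≤ a M := by
          simp only [ha]
          have : (0:ℝ) ≤ (M:ℝ) := Nat.cast_nonneg M
          push_cast
          nlinarith
        rw [intervalIntegral.integral_of_le hM, h0]
        apply setIntegral_mono_set integrableOn_gG_Ioi
        · exact Filter.Eventually.of_forall (fun x => gG_nonneg x)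
        · exact Filter.Eventually.of_forall (fun x hx => Ioc_subset_Ioi_self hx)

/-- `ĥ_k ≥ k²` on the Fourier grid, the sum bound
`Δk Σ_k 1/(1+ĥ_k)² ≤ ∫ 1/(1+k²)² dk + 2π`, and `‖ĝ‖²_{L²(𝒦)} ≤ π/2 + 2π`. -/
theorem stmt_14 (L : ℝ) (N : ℕ) [NeZero N] (hL : 1 ≤ L) (hN : Even N) (hdx : L / N ≤ 1)
    (θ : ℝ → ℝ) (hθ01 : ∀ k : ℝ, 0 ≤ θ k ∧ θ k ≤ 1)
    (hθ0 : ∀ k : ℝ, 3 / 4 * (Real.pi * N / L) ≤ |k| → θ k = 0) :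
    (∀ j : ZMod N, kval L N j ^ 2 ≤ hsym L N θ j) ∧
    2 * Real.pi / L * ∑ j : ZMod N, 1 / (1 + hsym L N θ j) ^ 2 ≤
      (∫ k : ℝ, 1 / (1 + k ^ 2) ^ 2) + 2 * Real.pi ∧
    wnorm (2 * Real.pi / L) (fun j => -1 / (1 + ((hsym L N θ j : ℝ) : ℂ))) ^ 2 ≤
      Real.pi / 2 + 2 * Real.pi := by
  obtain ⟨m, hm⟩ := hN
  have hNpos : 0 < N := Nat.pos_of_ne_zero (NeZero.ne N)
  have hm2 : N = 2 * m := by omega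
  have hm1 : 1 ≤ m := by omega
  have hLpos : (0:ℝ) < L := lt_of_lt_of_le one_pos hL
  have hNZ : (N:ℤ) = 2 * m := by exact_mod_cast hm2
  have hNcast : (N:ℝ) = 2 * m := by exact_mod_cast hm2
  set dk : ℝ := 2 * Real.pi / L with hdk_def
  have hdkpos : 0 < dk := by rw [hdk_def]; positivity
  have hdkle : dk ≤ 2 * Real.pi := by
    rw [hdk_def, div_le_iff₀ hLpos]
    nlinarith [Real.pi_pos]
  -- |k| ≤ k_c on the grid
  have habs : ∀ j : ZMod N, kval L N j ^ 2 ≤ (Real.pi * N / L) ^ 2 := by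
    intro j
    have hvlt : (ZMod.val j : ℤ) < (N:ℤ) := by exact_mod_cast ZMod.val_lt j
    have hv0 : (0:ℤ) ≤ (ZMod.val j : ℤ) := Int.natCast_nonneg _
    set z : ℤ := if (ZMod.val j : ℤ) ≤ (N : ℤ) / 2 then (ZMod.val j : ℤ)
      else (ZMod.val j : ℤ) - (N : ℤ) with hz
    have hint : z ^ 2 ≤ (m:ℤ) ^ 2 := by
      rw [hz]
      split_ifs with h
      · have h1 : (ZMod.val j : ℤ) ≤ (m:ℤ) := by omega
        nlinarith
      · have h1 : (m:ℤ) + 1 ≤ (ZMod.val j : ℤ) := by omega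
        have h2 : (ZMod.val j : ℤ) - N ≤ -1 := by omega
        have h3 : 1 - (m:ℤ) ≤ (ZMod.val j : ℤ) - N := by omega
        nlinarith
    have hreal : ((z:ℝ)) ^ 2 ≤ ((m:ℕ):ℝ) ^ 2 := by exact_mod_cast hint
    have hgoal : kval L N j = (z:ℝ) * dk := by
      simp only [kval, hz, hdk_def]
      congr 1
      split_ifs <;> push_cast <;> ring
    rw [hgoal, mul_pow]
    have hkc : (Real.pi * N / L) ^ 2 = ((m:ℕ):ℝ) ^ 2 * dk ^ 2 := by
      rw [hNcast, hdk_def]; ring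
    rw [hkc]
    have := mul_le_mul_of_nonneg_right hreal (le_of_lt (pow_pos hdkpos 2))
    linarith
  -- part 1
  have part1 : ∀ j : ZMod N, kval L N j ^ 2 ≤ hsym L N θ j := by
    intro j
    have h2 := habs j
    obtain ⟨ht0, ht1⟩ := hθ01 (kval L N j)
    simp only [hsym]
    nlinarith [mul_nonneg (sub_nonneg.mpr ht1) (sub_nonneg.mpr h2)]
  have hpos : ∀ j : ZMod N, 0 ≤ hsym L N θ j := fun j =>
    le_trans (sq_nonneg _) (part1 j)
  -- termwise bound
  have hterm : ∀ j : ZMod N, 1 / (1 + hsym L N θ j) ^ 2 ≤ gG (kval L N j) := by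
    intro j
    rw [gG]
    apply one_div_le_one_div_of_le (by positivity)
    have h1 : 1 + kval L N j ^ 2 ≤ 1 + hsym L N θ j := by linarith [part1 j]
    exact pow_le_pow_left₀ (by positivity) h1 2
  -- reindex the sum of gG over the grid
  have hsum_eq : ∑ j : ZMod N, gG (kval L N j) =
      ∑ v ∈ Finset.range N,
        gG (((if (v : ℤ) ≤ (N : ℤ) / 2 then (v : ℤ) else (v : ℤ) - (N : ℤ)) : ℝ) * dk) := by
    apply Finset.sum_nbij' (fun j => ZMod.val j) (fun v => (v : ZMod N))
    · intro j _; exact Finset.mem_range.mpr (ZMod.val_lt j)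
    · intro v _; exact Finset.mem_univ _
    · intro j _; exact ZMod.natCast_rightInverse j
    · intro v hv; exact ZMod.val_cast_of_lt (Finset.mem_range.mp hv)
    · intro j _
      simp only [kval, hdk_def]
  -- the summand as a function of the natural index
  set F : ℕ → ℝ := fun v =>
    gG (((if (v : ℤ) ≤ (N : ℤ) / 2 then (v : ℤ) else (v : ℤ) - (N : ℤ)) : ℝ) * dk) with hF
  set S : ℝ := ∑ i ∈ Finset.range m, gG (((i : ℝ) + 1) * dk) with hS
  have hsplit : ∑ v ∈ Finset.range N, F v =
      ∑ v ∈ Finset.range (m + 1), F v + ∑ v ∈ Finset.Ico (m + 1) N, F v := by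
    rw [Finset.range_eq_Ico, Finset.range_eq_Ico]
    exact (Finset.sum_Ico_consecutive F (Nat.zero_le _) (by omega : m + 1 ≤ N)).symm
  have hfirst : ∑ v ∈ Finset.range (m + 1), F v = S + gG 0 := by
    have hFv : ∀ v, v < m + 1 → F v = gG ((v:ℝ) * dk) := by
      intro v hv
      have hle : (v : ℤ) ≤ (N : ℤ) / 2 := by omega
      simp only [hF, if_pos hle]
      norm_num
    rw [Finset.sum_congr rfl (fun v hv => hFv v (Finset.mem_range.mp hv)),
      Finset.sum_range_succ']
    simp only [hS]
    congr 1
    · apply Finset.sum_congr rfl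
      intro i _
      congr 1
      push_cast
      ring
    · norm_num
  have hsecond : ∑ v ∈ Finset.Ico (m + 1) N, F v =
      ∑ w ∈ Finset.Ico 1 m, gG ((w:ℝ) * dk) := by
    apply Finset.sum_nbij' (fun v => N - v) (fun w => N - w)
    · intro v hv; simp only [Finset.mem_Ico] at *; omega
    · intro w hw; simp only [Finset.mem_Ico] at *; omega
    · intro v hv; simp only [Finset.mem_Ico] at hv; omega
    · intro w hw; simp only [Finset.mem_Ico] at hw; omega
    · intro v hv
      simp only [Finset.mem_Ico] at hv
      have hgt : ¬ ((v : ℤ) ≤ (N : ℤ) / 2) := by omega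
      simp only [hF, if_neg hgt]
      rw [← gG_even (((N - v : ℕ) : ℝ) * dk)]
      congr 1
      have hvN : v ≤ N := le_of_lt hv.2
      push_cast [Nat.cast_sub hvN]
      ring
  have hsecond_le : ∑ w ∈ Finset.Ico 1 m, gG ((w:ℝ) * dk) ≤ S := by
    have h1 : ∑ w ∈ Finset.Ico 1 m, gG ((w:ℝ) * dk) ≤
        ∑ w ∈ Finset.Ico 1 (m + 1), gG ((w:ℝ) * dk) := by
      apply Finset.sum_le_sum_of_subset_of_nonneg
      · exact Finset.Ico_subset_Ico le_rfl (by omega)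
      · intro w _ _; exact gG_nonneg _
    have h2 : ∑ w ∈ Finset.Ico 1 (m + 1), gG ((w:ℝ) * dk) = S := by
      rw [Finset.sum_Ico_eq_sum_range]
      simp only [Nat.add_sub_cancel, hS]
      apply Finset.sum_congr rfl
      intro i _
      congr 1
      push_cast
      ring
    linarith
  -- Riemann sum bound
  have hSbound : dk * S ≤ Real.pi / 4 := by
    have := riemann dk hdkpos m
    rw [integral_gG_Ioi] at this
    rw [hS, Finset.mul_sum]
    exact this
  -- the main chain
  have hchain : dk * ∑ j : ZMod N, 1 / (1 + hsym L N θ j) ^ 2 ≤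
      Real.pi / 2 + 2 * Real.pi := by
    have hb1 : ∑ j : ZMod N, 1 / (1 + hsym L N θ j) ^ 2 ≤ gG 0 + 2 * S := by
      calc ∑ j : ZMod N, 1 / (1 + hsym L N θ j) ^ 2
          ≤ ∑ j : ZMod N, gG (kval L N j) := Finset.sum_le_sum fun j _ => hterm j
        _ = ∑ v ∈ Finset.range N, F v := hsum_eq
        _ = ∑ v ∈ Finset.range (m + 1), F v + ∑ v ∈ Finset.Ico (m + 1) N, F v := hsplit
        _ = (S + gG 0) + ∑ w ∈ Finset.Ico 1 m, gG ((w:ℝ) * dk) := by rw [hfirst, hsecond]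
        _ ≤ (S + gG 0) + S := by linarith [hsecond_le]
        _ = gG 0 + 2 * S := by ring
    have hb2 : dk * ∑ j : ZMod N, 1 / (1 + hsym L N θ j) ^ 2 ≤ dk * (gG 0 + 2 * S) :=
      mul_le_mul_of_nonneg_left hb1 (le_of_lt hdkpos)
    have hg0 : gG 0 = 1 := by norm_num [gG]
    have hSnn : 0 ≤ S := by
      rw [hS]
      exact Finset.sum_nonneg fun i _ => gG_nonneg _
    calc dk * ∑ j : ZMod N, 1 / (1 + hsym L N θ j) ^ 2
        ≤ dk * (gG 0 + 2 * S) := hb2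
      _ = dk * gG 0 + 2 * (dk * S) := by ring
      _ ≤ 2 * Real.pi * 1 + 2 * (Real.pi / 4) := by
          rw [hg0]
          have := hSbound
          nlinarith
      _ = Real.pi / 2 + 2 * Real.pi := by ring
  refine ⟨part1, ?_, ?_⟩
  · have hIeq : (∫ k : ℝ, 1 / (1 + k ^ 2) ^ 2) = Real.pi / 2 := integral_gG
    rw [hIeq]
    linarith [hchain]
  · have hnorm : ∀ j : ZMod N,
        ‖(-1 : ℂ) / (1 + ((hsym L N θ j : ℝ) : ℂ))‖ ^ 2 = 1 / (1 + hsym L N θ j) ^ 2 := by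
      intro j
      rw [norm_div, norm_neg, norm_one, div_pow, one_pow]
      congr 1
      rw [show (1 + ((hsym L N θ j : ℝ) : ℂ)) = (((1 + hsym L N θ j : ℝ)) : ℂ) by push_cast; ring]
      rw [Complex.norm_real, Real.norm_eq_abs, sq_abs]
    have hw : wnorm dk (fun j => -1 / (1 + ((hsym L N θ j : ℝ) : ℂ))) ^ 2 =
        dk * ∑ j : ZMod N, 1 / (1 + hsym L N θ j) ^ 2 := by
      rw [wnorm, Real.sq_sqrt (by positivity)]
      congr 1
      exact Finset.sum_congr rfl fun j _ => hnorm j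
    rw [hw]
    exact hchain
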